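/- Let P be a nonprincipal ultrafilter on ℕ with ℙ ∈ P, and let n ≥ 1. Then the set of ultrafilters F on ℕ such that A^{(2)} ∈ F for every A ∈ P with A ⊆ ℙ has exactly n elements if and only if P is n-Ramsey. -/

import Mathlib

/-- The set of primes, as a subset of the positive integers. -/
def primes : Set ℕ+ := {p | (p : ℕ).Prime}

/-- `A^{(2)} = {ab : a, b ∈ A, a ≠ b}`. -/
def pairSq (A : Set ℕ+) : Set ℕ+ := {x | ∃ a ∈ A, ∃ b ∈ A, a ≠ b ∧ x = a * b}

/-- `F` satisfies the partition property for `n`: for every coloring of the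
two-element subsets of `ℕ` with `n+1` colors there is `A ∈ F` such that the
pairs from `A` get at most `n` colors. -/
def PartProp (F : Ultrafilter ℕ+) (n : ℕ) : Prop :=
  ∀ c : Sym2 ℕ+ → Fin (n + 1), ∃ A ∈ F,
    Set.ncard {i : Fin (n + 1) | ∃ a ∈ A, ∃ b ∈ A, a ≠ b ∧ c s(a, b) = i} ≤ n

/-- `F` is `n`-Ramsey: `n` is the smallest positive integer for which `F`
satisfies the partition property. -/
def NRamsey (F : Ultrafilter ℕ+) (n : ℕ) : Prop :=
  PartProp F n ∧ ∀ m : ℕ, 0 < m → PartProp F m → n ≤ m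

open Set Filter

/-- Unique factorization of a product of two distinct primes. -/
lemma prime_mul_eq {a b a' b' : ℕ+} (ha : (a:ℕ).Prime) (hb : (b:ℕ).Prime)
    (ha' : (a':ℕ).Prime) (hb' : (b':ℕ).Prime) (h : a * b = a' * b') :
    (a = a' ∧ b = b') ∨ (a = b' ∧ b = a') := by
  have hN : (a:ℕ) * (b:ℕ) = (a':ℕ) * (b':ℕ) := by exact_mod_cast congrArg (fun x : ℕ+ => (x:ℕ)) h
  have hd : (a':ℕ) ∣ (a:ℕ) * (b:ℕ) := ⟨(b':ℕ), hN⟩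
  rcases (Nat.Prime.dvd_mul ha').1 hd with h1 | h1
  · left
    have hae : a' = a := PNat.coe_injective ((Nat.prime_dvd_prime_iff_eq ha' ha).1 h1)
    subst hae
    exact ⟨rfl, mul_left_cancel h⟩
  · right
    have hae : a' = b := PNat.coe_injective ((Nat.prime_dvd_prime_iff_eq ha' hb).1 h1)
    subst hae
    have h2 : a' * a = a' * b' := by rw [mul_comm a' a]; exact h
    exact ⟨mul_left_cancel h2, rfl⟩

lemma sym2_prime_eq {a b a' b' : ℕ+} (ha : (a:ℕ).Prime) (hb : (b:ℕ).Prime)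
    (ha' : (a':ℕ).Prime) (hb' : (b':ℕ).Prime) (h : a * b = a' * b') :
    s(a, b) = s(a', b') := by
  rcases prime_mul_eq ha hb ha' hb' h with ⟨h1, h2⟩ | ⟨h1, h2⟩ <;>
    simp [Sym2.eq_iff, h1, h2]

/-- Lower bound: if the partition property for `m` fails, there are `m+1` distinct
ultrafilters containing all `pairSq A`. -/
lemma LB (P : Ultrafilter ℕ+) (hP : primes ∈ P) (m : ℕ) (h : ¬ PartProp P m) :
    ∃ f : Fin (m+1) → Ultrafilter ℕ+, Function.Injective f ∧
      ∀ i, ∀ A ∈ P, A ⊆ primes → pairSq A ∈ f i := by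
  rw [PartProp] at h; push_neg at h
  obtain ⟨c, hc⟩ := h
  have hall : ∀ A ∈ P, ∀ i : Fin (m+1), ∃ a ∈ A, ∃ b ∈ A, a ≠ b ∧ c s(a,b) = i := by
    intro A hA i
    have h1 := hc A hA
    have hTu : {i : Fin (m+1) | ∃ a ∈ A, ∃ b ∈ A, a ≠ b ∧ c s(a,b) = i} = Set.univ := by
      apply Set.eq_of_subset_of_ncard_le (Set.subset_univ _) ?_ Set.finite_univ
      rw [Set.ncard_univ, Nat.card_eq_fintype_card, Fintype.card_fin]
      omega
    have : i ∈ {i : Fin (m+1) | ∃ a ∈ A, ∃ b ∈ A, a ≠ b ∧ c s(a,b) = i} := by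
      rw [hTu]; trivial
    exact this
  set D : Fin (m+1) → Set ℕ+ := fun i =>
    {x | ∃ a b : ℕ+, (a:ℕ).Prime ∧ (b:ℕ).Prime ∧ a ≠ b ∧ c s(a,b) = i ∧ x = a * b} with hD
  have hDdisj : ∀ i j, i ≠ j → D i ∩ D j = ∅ := by
    intro i j hij
    ext x
    simp only [Set.mem_inter_iff, Set.mem_empty_iff_false, iff_false]
    rintro ⟨⟨a, b, ha, hb, hab, hci, rfl⟩, ⟨a', b', ha', hb', hab', hcj, he⟩⟩
    exact hij (hci ▸ hcj ▸ (by rw [sym2_prime_eq ha hb ha' hb' he]))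
  set fam : Fin (m+1) → Set (Set ℕ+) := fun i =>
    {s | ∃ A, A ∈ P ∧ A ⊆ primes ∧ s = pairSq A ∩ D i} with hfam
  have hne : ∀ i, Filter.NeBot (Filter.generate (fam i)) := by
    intro i
    rw [Filter.generate_neBot_iff]
    intro t hts htf
    have hch : ∀ s : Set ℕ+, ∃ A : Set ℕ+,
        s ∈ t → (A ∈ P ∧ A ⊆ primes ∧ s = pairSq A ∩ D i) := by
      intro s
      by_cases hs : s ∈ t
      · obtain ⟨A, hA⟩ := hts hs; exact ⟨A, fun _ => hA⟩
      · exact ⟨∅, fun hmem => absurd hmem hs⟩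
    choose g hg using hch
    set B := primes ∩ ⋂ s ∈ t, g s with hB
    have hBP : B ∈ P := by
      apply Filter.inter_mem hP
      exact (Filter.biInter_mem htf).2 fun s hs => (hg s hs).1
    obtain ⟨a, haB, b, hbB, hab, hcab⟩ := hall B hBP i
    refine ⟨a * b, Set.mem_sInter.2 fun s hs => ?_⟩
    rw [(hg s hs).2.2]
    have hag : a ∈ g s := Set.mem_iInter₂.1 haB.2 s hs
    have hbg : b ∈ g s := Set.mem_iInter₂.1 hbB.2 s hs
    exact ⟨⟨a, hag, b, hbg, hab, rfl⟩, ⟨a, b, haB.1, hbB.1, hab, hcab, rfl⟩⟩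
  set f : Fin (m+1) → Ultrafilter ℕ+ :=
    fun i => @Ultrafilter.of _ (Filter.generate (fam i)) (hne i) with hf
  have hmem : ∀ i, ∀ A, A ∈ P → A ⊆ primes → pairSq A ∩ D i ∈ f i := by
    intro i A hA hAp
    exact (@Ultrafilter.of_le _ (Filter.generate (fam i)) (hne i))
      (Filter.mem_generate_of_mem ⟨A, hA, hAp, rfl⟩)
  have hDi : ∀ i, D i ∈ f i := fun i =>
    Filter.mem_of_superset (hmem i primes hP subset_rfl) Set.inter_subset_right
  refine ⟨f, ?_, fun i A hA hAp =>
    Filter.mem_of_superset (hmem i A hA hAp) Set.inter_subset_left⟩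
  intro i j hij
  by_contra hne'
  have hmem2 : D i ∩ D j ∈ f i := Filter.inter_mem (hDi i) (hij ▸ hDi j)
  rw [hDdisj i j hne'] at hmem2
  exact Filter.empty_notMem (f i : Filter ℕ+) hmem2

/-- Upper bound: if `P` has the partition property for `m`, there are no `m+1`
distinct ultrafilters containing all `pairSq A`. -/
lemma UB (P : Ultrafilter ℕ+) (hP : primes ∈ P) (m : ℕ) (hpp : PartProp P m)
    (f : Fin (m+1) → Ultrafilter ℕ+) (hinj : Function.Injective f)
    (hf : ∀ i, ∀ A ∈ P, A ⊆ primes → pairSq A ∈ f i) : False := by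
  classical
  have hsep : ∀ i j : Fin (m+1), i ≠ j → ∃ Z : Set ℕ+, Z ∈ f i ∧ Zᶜ ∈ f j := by
    intro i j hij
    have hne : f i ≠ f j := fun h => hij (hinj h)
    by_contra hcon; push_neg at hcon
    apply hne
    have hle : (f i : Filter ℕ+) ≤ (f j : Filter ℕ+) := by
      rw [Filter.le_def]
      intro s hs
      by_contra hsi
      have h1 : sᶜ ∈ f i := (Ultrafilter.compl_mem_iff_notMem).2 hsi
      have h2 := hcon sᶜ h1
      rw [compl_compl] at h2
      exact h2 hs
    exact Ultrafilter.coe_le_coe.1 hle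
  choose Z hZ1 hZ2 using hsep
  set Y : Fin (m+1) → Set ℕ+ := fun i =>
    (⋂ j, ⋂ (h : i < j), Z i j h.ne) ∩ (⋂ j, ⋂ (h : j < i), (Z j i h.ne)ᶜ) with hYdef
  have hY : ∀ i, Y i ∈ f i := by
    intro i
    apply Filter.inter_mem
    · exact Filter.iInter_mem.2 fun j => Filter.iInter_mem.2 fun h => hZ1 i j h.ne
    · exact Filter.iInter_mem.2 fun j => Filter.iInter_mem.2 fun h => hZ2 j i h.ne
  have hYdisj : ∀ i j, i ≠ j → ∀ x, x ∈ Y i → x ∈ Y j → False := by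
    have key : ∀ i j, i < j → ∀ x, x ∈ Y i → x ∈ Y j → False := by
      intro i j hlt x hxi hxj
      have h1 : x ∈ Z i j hlt.ne := Set.mem_iInter.1 (Set.mem_iInter.1 hxi.1 j) hlt
      have h2 : x ∈ (Z i j hlt.ne)ᶜ := Set.mem_iInter.1 (Set.mem_iInter.1 hxj.2 i) hlt
      exact h2 h1
    intro i j hij x hxi hxj
    rcases hij.lt_or_gt with hlt | hlt
    · exact key i j hlt x hxi hxj
    · exact key j i hlt x hxj hxi
  set h : ℕ+ → Fin (m+1) := fun x => if hx : ∃ i, x ∈ Y i then hx.choose else 0 with hh0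
  have hh : ∀ x i, x ∈ Y i → h x = i := by
    intro x i hxi
    have hx : ∃ i, x ∈ Y i := ⟨i, hxi⟩
    simp only [hh0, dif_pos hx]
    by_contra hne
    exact hYdisj _ _ hne x hx.choose_spec hxi
  set c : Sym2 ℕ+ → Fin (m+1) :=
    Sym2.lift ⟨fun a b => h (a*b), fun a b => congrArg h (mul_comm a b)⟩ with hc
  obtain ⟨A, hA, hcard⟩ := hpp c
  have hAll : ∀ i : Fin (m+1), ∃ a ∈ A, ∃ b ∈ A, a ≠ b ∧ c s(a,b) = i := by
    intro i
    have h1 : pairSq (A ∩ primes) ∈ f i :=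
      hf i _ (Filter.inter_mem hA hP) Set.inter_subset_right
    have h2 : pairSq (A ∩ primes) ∩ Y i ∈ f i := Filter.inter_mem h1 (hY i)
    obtain ⟨x, ⟨a, haA, b, hbA, hab, rfl⟩, hxY⟩ :=
      Filter.nonempty_of_mem (f := (f i : Filter ℕ+)) h2
    refine ⟨a, haA.1, b, hbA.1, hab, ?_⟩
    show Sym2.lift ⟨fun a b => h (a*b), fun a b => congrArg h (mul_comm a b)⟩ s(a,b) = i
    rw [Sym2.lift_mk]
    exact hh (a*b) i hxY
  have huniv : {i : Fin (m+1) | ∃ a ∈ A, ∃ b ∈ A, a ≠ b ∧ c s(a,b) = i} = Set.univ :=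
    Set.eq_univ_of_forall hAll
  rw [huniv, Set.ncard_univ, Nat.card_eq_fintype_card, Fintype.card_fin] at hcard
  omega

lemma keyzero (P : Ultrafilter ℕ+) (hnp : ∀ m : ℕ+, P ≠ pure m) : ¬ PartProp P 0 := by
  intro h
  obtain ⟨A, hA, hcard⟩ := h (fun _ => 0)
  have hnt : A.Nontrivial := by
    by_contra hsub
    rw [Set.not_nontrivial_iff] at hsub
    obtain ⟨x, _, hpx⟩ := Ultrafilter.eq_pure_of_finite_mem hsub.finite hA
    exact hnp x hpx
  obtain ⟨a, ha, b, hb, hab⟩ := hnt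
  have h0 : (0 : Fin 1) ∈
      {i : Fin 1 | ∃ a ∈ A, ∃ b ∈ A, a ≠ b ∧ (fun _ => (0 : Fin 1)) s(a,b) = i} :=
    ⟨a, ha, b, hb, hab, rfl⟩
  have hemp := (Set.ncard_eq_zero (Set.toFinite _)).1 (Nat.le_zero.1 hcard)
  rw [hemp] at h0
  exact h0

lemma exists_inj {α : Type*} {S : Set α} {k : ℕ} (h : S.Infinite ∨ k ≤ S.ncard) :
    ∃ f : Fin k → α, Function.Injective f ∧ ∀ i, f i ∈ S := by
  rcases Nat.eq_zero_or_pos k with rfl | hk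
  · exact ⟨Fin.elim0, fun i => i.elim0, fun i => i.elim0⟩
  have hT : ∃ t ⊆ S, t.Finite ∧ t.ncard = k := by
    rcases h with h | h
    · obtain ⟨t, h1, h2, h3⟩ := h.exists_subset_ncard_eq k
      exact ⟨t, h1, h2, h3⟩
    · obtain ⟨t, hts, htk⟩ := Set.exists_subset_card_eq h
      refine ⟨t, hts, ?_, htk⟩
      by_contra hinf
      rw [Set.Infinite.ncard hinf] at htk
      omega
  obtain ⟨t, hts, htf, htk⟩ := hT
  have := htf.fintype
  have hcard : Fintype.card {x // x ∈ htf.toFinset} = k := by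
    rw [Fintype.card_coe, ← Set.ncard_eq_toFinset_card t htf, htk]
  set e : {x // x ∈ htf.toFinset} ≃ Fin k := Fintype.equivFinOfCardEq hcard with he
  refine ⟨fun i => (e.symm i : α), ?_, ?_⟩
  · exact fun i j hij => e.symm.injective (Subtype.val_injective hij)
  · intro i
    exact hts (htf.mem_toFinset.1 (e.symm i).2)

lemma inj_le {α : Type*} {S : Set α} {k : ℕ} (hfin : S.Finite)
    (f : Fin k → α) (hinj : Function.Injective f) (hmem : ∀ i, f i ∈ S) : k ≤ S.ncard := by
  have h1 : (Set.range f).ncard = k := by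
    rw [← Set.image_univ, Set.ncard_image_of_injective _ hinj, Set.ncard_univ,
      Nat.card_eq_fintype_card, Fintype.card_fin]
  rw [← h1]
  exact Set.ncard_le_ncard (Set.range_subset_iff.2 hmem) hfin

theorem stmt11 (P : Ultrafilter ℕ+) (hnp : ∀ m : ℕ+, P ≠ pure m) (hP : primes ∈ P)
    (n : ℕ) (hn : 1 ≤ n) :
    Set.ncard {F : Ultrafilter ℕ+ | ∀ A ∈ P, A ⊆ primes → pairSq A ∈ F} = n ↔
      NRamsey P n := by
  set S := {F : Ultrafilter ℕ+ | ∀ A ∈ P, A ⊆ primes → pairSq A ∈ F} with hSdef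
  constructor
  · intro hcard
    have hSfin : S.Finite := by
      by_contra hinf
      rw [Set.Infinite.ncard hinf] at hcard
      omega
    have hpp : PartProp P n := by
      by_contra hnot
      obtain ⟨f, hinj, hmem⟩ := LB P hP n hnot
      have hle := inj_le hSfin f hinj (fun i => hmem i)
      rw [hcard] at hle
      omega
    refine ⟨hpp, ?_⟩
    intro m hm hppm
    by_contra hlt; push_neg at hlt
    obtain ⟨f, hinj, hmem⟩ := exists_inj (S := S) (k := m+1) (Or.inr (by rw [hcard]; omega))
    exact UB P hP m hppm f hinj (fun i => hmem i)
  · rintro ⟨hpp, hmin⟩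
    have hub : ¬ (S.Infinite ∨ n + 1 ≤ S.ncard) := by
      intro h
      obtain ⟨f, hinj, hmem⟩ := exists_inj h
      exact UB P hP n hpp f hinj fun i => hmem i
    push_neg at hub
    obtain ⟨hSfin', hle⟩ := hub
    have hnot : ¬ PartProp P (n - 1) := by
      rcases eq_or_lt_of_le hn with h1 | h1
      · have h0 : n - 1 = 0 := by omega
        rw [h0]
        exact keyzero P hnp
      · intro hp
        have := hmin (n - 1) (by omega) hp
        omega
    obtain ⟨f, hinj, hmem⟩ := LB P hP (n - 1) hnot
    have hge := inj_le hSfin' f hinj fun i => hmem i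
    omega
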